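/- The map ∫₀^– : L^1[0,1] → C_*[0,1], sending f to the function x ↦ ∫₀ˣ f, is a linear contraction satisfying ∫₀^–(1) = i (where i(x) = x) and ∫₀^–(γ(f,g)) = κ(∫₀^– f, ∫₀^– g) for all f, g ∈ L^1[0,1]. -/

import Mathlib

open MeasureTheory

local notation "μ01" => MeasureTheory.volume.restrict (Set.Icc (0:ℝ) 1)

/-- The indefinite integral `x ↦ ∫₀ˣ f` of an element of `L¹[0,1]`. -/
noncomputable def indefInt {𝕜 : Type*} [RCLike 𝕜] (f : Lp 𝕜 1 μ01) (x : ℝ) : 𝕜 :=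
  ∫ t in Set.Ioc (0:ℝ) x, f t ∂μ01

lemma restrict_eq_vol {s : Set ℝ} (hs : MeasurableSet s) (h : s ⊆ Set.Icc (0:ℝ) 1) :
    Measure.restrict μ01 s = MeasureTheory.volume.restrict s := by
  rw [Measure.restrict_restrict hs, Set.inter_eq_left.mpr h]

lemma indef_eq_interval {𝕜 : Type*} [RCLike 𝕜] (f : Lp 𝕜 1 μ01) (x : ℝ) :
    indefInt f x = ∫ t in (0:ℝ)..x, f t ∂μ01 := by
  rcases le_or_gt 0 x with hx | hx
  · rw [indefInt, intervalIntegral.integral_of_le hx]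
  · rw [indefInt, Set.Ioc_eq_empty (by linarith), Measure.restrict_empty,
      integral_zero_measure, intervalIntegral.integral_of_ge hx.le]
    have h0 : μ01 (Set.Ioc x 0) = 0 := by
      rw [Measure.restrict_apply measurableSet_Ioc]
      refine measure_mono_null (fun t ht => ?_) (measure_singleton (0:ℝ))
      have := ht.1.2; have := ht.2.1
      simp only [Set.mem_singleton_iff]; linarith
    rw [Measure.restrict_eq_zero.mpr h0, integral_zero_measure, neg_zero]

lemma indef_eq_vol {𝕜 : Type*} [RCLike 𝕜] (f : Lp 𝕜 1 μ01) {x : ℝ}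
    (h0 : 0 ≤ x) (h1 : x ≤ 1) :
    indefInt f x = ∫ t in (0:ℝ)..x, f t := by
  rw [indefInt, restrict_eq_vol measurableSet_Ioc
      (fun t ht => ⟨ht.1.le, ht.2.trans h1⟩), intervalIntegral.integral_of_le h0]

lemma cont_indef {𝕜 : Type*} [RCLike 𝕜] (f : Lp 𝕜 1 μ01) :
    Continuous (indefInt f) := by
  have h : indefInt f = fun x => ∫ t in (0:ℝ)..x, f t ∂μ01 :=
    funext fun x => indef_eq_interval f x
  rw [h]
  exact intervalIntegral.continuous_primitive
    (fun a b => (L1.integrable_coeFn f).intervalIntegrable) 0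

example {𝕜 : Type*} [RCLike 𝕜] (f g : Lp 𝕜 1 μ01) (x : ℝ) :
    indefInt (f + g) x = indefInt f x + indefInt g x := by
  rw [indefInt, indefInt, indefInt,
    integral_congr_ae (ae_restrict_of_ae (Lp.coeFn_add f g)),
    ← integral_add ((L1.integrable_coeFn f).integrableOn)
      ((L1.integrable_coeFn g).integrableOn)]
  rfl

example {𝕜 : Type*} [RCLike 𝕜] (f : Lp 𝕜 1 μ01) (c : 𝕜) (x : ℝ) :
    indefInt (c • f) x = c * indefInt f x := by
  rw [indefInt, indefInt, integral_congr_ae (ae_restrict_of_ae (Lp.coeFn_smul c f)),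
    ← smul_eq_mul, ← integral_smul]
  rfl

example {𝕜 : Type*} [RCLike 𝕜] (f : Lp 𝕜 1 μ01) (x : ℝ) :
    ‖indefInt f x‖ ≤ ‖f‖ := by
  rw [indefInt, L1.norm_eq_integral_norm]
  refine (norm_integral_le_integral_norm _).trans ?_
  exact setIntegral_le_integral (L1.integrable_coeFn f).norm
    (Filter.Eventually.of_forall fun _ => norm_nonneg _)

example {𝕜 : Type*} [RCLike 𝕜] (one : Lp 𝕜 1 μ01) (hone : ⇑one =ᵐ[μ01] fun _ => 1)
    {x : ℝ} (h0 : 0 ≤ x) (h1 : x ≤ 1) : indefInt one x = (x : 𝕜) := by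
  rw [indefInt, integral_congr_ae (ae_restrict_of_ae hone), setIntegral_const, measureReal_def,
    Measure.restrict_apply measurableSet_Ioc,
    Set.inter_eq_left.mpr (show Set.Ioc 0 x ⊆ Set.Icc 0 1 from
      fun t ht => ⟨ht.1.le, ht.2.trans h1⟩)]
  rw [Real.volume_Ioc, sub_zero, ENNReal.toReal_ofReal h0,
    RCLike.real_smul_eq_coe_mul, mul_one]

lemma ae_ne_half : ∀ᵐ t : ℝ ∂MeasureTheory.volume, t ≠ 1/2 := by
  rw [ae_iff]
  simpa [Set.setOf_eq_eq_singleton] using measure_singleton ((1:ℝ)/2)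

lemma piece1 {𝕜 : Type*} [RCLike 𝕜] (f g h : Lp 𝕜 1 μ01)
    (hh : ⇑h =ᵐ[μ01] fun x : ℝ => if x < 1/2 then f (2 * x) else g (2 * x - 1))
    {y : ℝ} (h0 : 0 ≤ y) (h2 : y ≤ 1/2) :
    ∫ t in Set.Ioc (0:ℝ) y, h t ∂μ01 = (2:ℝ)⁻¹ • indefInt f (2 * y) := by
  have hsub : Set.Ioc (0:ℝ) y ⊆ Set.Icc 0 1 :=
    fun t ht => ⟨ht.1.le, ht.2.trans (by linarith)⟩
  calc ∫ t in Set.Ioc (0:ℝ) y, h t ∂μ01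
      = ∫ t in Set.Ioc (0:ℝ) y, (if t < 1/2 then f (2*t) else g (2*t-1)) ∂μ01 :=
        integral_congr_ae (ae_restrict_of_ae hh)
    _ = ∫ t in Set.Ioc (0:ℝ) y, f (2*t) ∂μ01 := by
        apply integral_congr_ae
        filter_upwards [ae_restrict_mem (μ := μ01) measurableSet_Ioc,
          ae_restrict_of_ae (ae_restrict_of_ae ae_ne_half)] with t ht hne
        rw [if_pos (lt_of_le_of_ne (ht.2.trans h2) hne)]
    _ = ∫ t in (0:ℝ)..y, f (2*t) := by
        rw [restrict_eq_vol measurableSet_Ioc hsub, intervalIntegral.integral_of_le h0]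
    _ = (2:ℝ)⁻¹ • ∫ s in (0:ℝ)..(2*y), f s := by
        simpa using intervalIntegral.integral_comp_mul_left (a := 0) (b := y)
          (c := 2) (fun s => f s) two_ne_zero
    _ = (2:ℝ)⁻¹ • indefInt f (2 * y) := by
        rw [indef_eq_vol f (by linarith) (by linarith)]

lemma piece2 {𝕜 : Type*} [RCLike 𝕜] (f g h : Lp 𝕜 1 μ01)
    (hh : ⇑h =ᵐ[μ01] fun x : ℝ => if x < 1/2 then f (2 * x) else g (2 * x - 1))
    {x : ℝ} (hx : 1/2 ≤ x) (hx1 : x ≤ 1) :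
    ∫ t in Set.Ioc (1/2:ℝ) x, h t ∂μ01 = (2:ℝ)⁻¹ • indefInt g (2 * x - 1) := by
  have hsub : Set.Ioc (1/2:ℝ) x ⊆ Set.Icc 0 1 :=
    fun t ht => ⟨by linarith [ht.1], ht.2.trans hx1⟩
  calc ∫ t in Set.Ioc (1/2:ℝ) x, h t ∂μ01
      = ∫ t in Set.Ioc (1/2:ℝ) x, (if t < 1/2 then f (2*t) else g (2*t-1)) ∂μ01 :=
        integral_congr_ae (ae_restrict_of_ae hh)
    _ = ∫ t in Set.Ioc (1/2:ℝ) x, g (2*t-1) ∂μ01 := by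
        apply integral_congr_ae
        filter_upwards [ae_restrict_mem (μ := μ01) measurableSet_Ioc] with t ht
        rw [if_neg (not_lt.mpr ht.1.le)]
    _ = ∫ t in (1/2:ℝ)..x, g (2*t + (-1)) := by
        rw [restrict_eq_vol measurableSet_Ioc hsub, intervalIntegral.integral_of_le hx]
        simp only [sub_eq_add_neg]
    _ = (2:ℝ)⁻¹ • ∫ s in (0:ℝ)..(2*x-1), g s := by
        have := intervalIntegral.integral_comp_mul_add (a := 1/2) (b := x)
          (c := 2) (fun s => g s) two_ne_zero (-1)
        rw [this, show (2:ℝ)*(1/2)+(-1) = 0 by norm_num,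
          show (2:ℝ)*x+(-1) = 2*x-1 by ring]
    _ = (2:ℝ)⁻¹ • indefInt g (2 * x - 1) := by
        rw [indef_eq_vol g (by linarith) (by linarith)]

/-- the map `∫₀^– : L¹[0,1] → C_*[0,1]`, `f ↦ (x ↦ ∫₀ˣ f)`, lands in
`C_*[0,1]` (continuous functions vanishing at `0`), is a linear contraction for the sup
norm on `C_*[0,1]`, sends `1` to the identity function `i(x) = x`, and satisfies
`∫₀^–(γ(f,g)) = κ(∫₀^– f, ∫₀^– g)`. -/
theorem stmt_5 {𝕜 : Type*} [RCLike 𝕜]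
    (one : Lp 𝕜 1 μ01) (hone : ⇑one =ᵐ[μ01] fun _ => 1)
    (γ : Lp 𝕜 1 μ01 × Lp 𝕜 1 μ01 → Lp 𝕜 1 μ01)
    (hγ : ∀ fg : Lp 𝕜 1 μ01 × Lp 𝕜 1 μ01,
      ⇑(γ fg) =ᵐ[μ01] fun x : ℝ => if x < 1/2 then fg.1 (2 * x) else fg.2 (2 * x - 1))
    (f g : Lp 𝕜 1 μ01) (c : 𝕜) :
    -- lands in `C_*[0,1]`:
    ContinuousOn (indefInt f) (Set.Icc (0:ℝ) 1) ∧
    indefInt f 0 = 0 ∧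
    -- linear:
    (∀ x : ℝ, indefInt (f + g) x = indefInt f x + indefInt g x) ∧
    (∀ x : ℝ, indefInt (c • f) x = c * indefInt f x) ∧
    -- contraction for the sup norm:
    (∀ x ∈ Set.Icc (0:ℝ) 1, ‖indefInt f x‖ ≤ ‖f‖) ∧
    -- sends the constant function 1 to `i(x) = x`:
    (∀ x ∈ Set.Icc (0:ℝ) 1, indefInt one x = (x : 𝕜)) ∧
    -- intertwines `γ` and `κ`:
    (∀ x ∈ Set.Icc (0:ℝ) 1,
      indefInt (γ (f, g)) x =
        if x ≤ 1/2 then (1/2 : 𝕜) * indefInt f (2 * x)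
        else (1/2 : 𝕜) * (indefInt f 1 + indefInt g (2 * x - 1))) := by
  refine ⟨(cont_indef f).continuousOn, by simp [indefInt], ?_, ?_, ?_, ?_, ?_⟩
  · intro x
    rw [indefInt, indefInt, indefInt,
      integral_congr_ae (ae_restrict_of_ae (Lp.coeFn_add f g)),
      ← integral_add ((L1.integrable_coeFn f).integrableOn)
        ((L1.integrable_coeFn g).integrableOn)]
    rfl
  · intro x
    rw [indefInt, indefInt, integral_congr_ae (ae_restrict_of_ae (Lp.coeFn_smul c f)),
      ← smul_eq_mul, ← integral_smul]
    rfl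
  · intro x _
    rw [indefInt, L1.norm_eq_integral_norm]
    refine (norm_integral_le_integral_norm _).trans ?_
    exact setIntegral_le_integral (L1.integrable_coeFn f).norm
      (Filter.Eventually.of_forall fun _ => norm_nonneg _)
  · rintro x ⟨h0, h1⟩
    rw [indefInt, integral_congr_ae (ae_restrict_of_ae hone), setIntegral_const, measureReal_def,
      Measure.restrict_apply measurableSet_Ioc,
      Set.inter_eq_left.mpr (show Set.Ioc 0 x ⊆ Set.Icc 0 1 from
        fun t ht => ⟨ht.1.le, ht.2.trans h1⟩)]
    rw [Real.volume_Ioc, sub_zero, ENNReal.toReal_ofReal h0,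
      RCLike.real_smul_eq_coe_mul, mul_one]
  · rintro x ⟨h0, h1⟩
    by_cases hx : x ≤ 1/2
    · rw [if_pos hx, show indefInt (γ (f, g)) x = ∫ t in Set.Ioc (0:ℝ) x, (γ (f, g)) t ∂μ01
        from rfl, piece1 f g _ (hγ (f, g)) h0 hx, RCLike.real_smul_eq_coe_mul]
      norm_num [map_ofNat]
    · push_neg at hx
      rw [if_neg (not_le.mpr hx), indefInt,
        ← Set.Ioc_union_Ioc_eq_Ioc (by norm_num : (0:ℝ) ≤ 1/2) hx.le,
        setIntegral_union (Set.Ioc_disjoint_Ioc_of_le le_rfl) measurableSet_Ioc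
          ((L1.integrable_coeFn (γ (f, g))).integrableOn)
          ((L1.integrable_coeFn (γ (f, g))).integrableOn),
        piece1 f g _ (hγ (f, g)) (by norm_num) (le_refl (1/2:ℝ)),
        piece2 f g _ (hγ (f, g)) hx.le h1,
        show (2:ℝ) * (1/2) = 1 by norm_num,
        RCLike.real_smul_eq_coe_mul, RCLike.real_smul_eq_coe_mul, ← mul_add]
      norm_num [map_ofNat]
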